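/- Let A be an infinite {0,1}-matrix and c : ℕ → {0,1}. Suppose A(i, n+1) = c_i for all i = 1,...,n+1. Then the map φ : Ker([I_n − A_n^t; −C_n^t]) → Ker([I_{n+1} − A_{n+1}^t; −C_{n+1}^t]) given by appending a zero coordinate, (x_1,...,x_n) ↦ (x_1,...,x_n,0), is a group isomorphism: every element of Ker([I_{n+1} − A_{n+1}^t; −C_{n+1}^t]) has last coordinate zero, and its first n coordinates lie in Ker([I_n − A_n^t; −C_n^t]). -/

import Mathlib

open Matrix
open Matrix

/-- The (m+1)×m integer matrix `[I_m − A_m^t; −C_m^t]`: top m rows form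
`I_m − A_m^t` (where `A_m` is the upper-left m×m corner of the infinite
matrix `A`) and bottom row is `(−c 0, …, −c (m-1))`.  (0-based indexing.) -/
def TMat (A : ℕ → ℕ → ℤ) (c : ℕ → ℤ) (m : ℕ) :
    Matrix (Fin (m + 1)) (Fin m) ℤ :=
  Matrix.of fun i j =>
    if (i : ℕ) < m then (if (i : ℕ) = (j : ℕ) then 1 else 0) - A (j : ℕ) (i : ℕ)
    else -c (j : ℕ)

theorem stmt4 (A : ℕ → ℕ → ℤ) (c : ℕ → ℤ)
    (hA : ∀ i j, A i j = 0 ∨ A i j = 1) (hc : ∀ i, c i = 0 ∨ c i = 1)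
    (n : ℕ) (hDRS : ∀ i < n + 1, A i n = c i) :
    -- appending a zero coordinate maps Ker into Ker
    (∀ x : Fin n → ℤ, (TMat A c n).mulVec x = 0 →
      (TMat A c (n + 1)).mulVec (Fin.snoc x 0) = 0) ∧
    -- every element of the bigger kernel has last coordinate zero and its
    -- first n coordinates lie in the smaller kernel
    (∀ y : Fin (n + 1) → ℤ, (TMat A c (n + 1)).mulVec y = 0 →
      y (Fin.last n) = 0 ∧ (TMat A c n).mulVec (fun i => y i.castSucc) = 0) ∧
    -- hence appending zero gives a group isomorphism of kernels
    ∃ e : LinearMap.ker (TMat A c n).mulVecLin ≃ₗ[ℤ]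
        LinearMap.ker (TMat A c (n + 1)).mulVecLin,
      ∀ x : LinearMap.ker (TMat A c n).mulVecLin,
        (e x : Fin (n + 1) → ℤ) = Fin.snoc (x : Fin n → ℤ) 0 := by
  -- relation between rows of the two matrices on the first n columns
  have hrow : ∀ (i : Fin (n + 2)) (j : Fin n),
      TMat A c (n + 1) i j.castSucc =
        if h : (i : ℕ) < n then TMat A c n ⟨i, by omega⟩ j
        else TMat A c n (Fin.last n) j := by
    intro i j
    have hj : (j : ℕ) < n := j.isLt
    simp only [TMat, Matrix.of_apply, Fin.coe_castSucc, Fin.val_last]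
    by_cases h : (i : ℕ) < n
    · have : (i : ℕ) < n + 1 := by omega
      simp [h, this]
    · simp only [dif_neg h, if_neg (by omega : ¬ (n : ℕ) < n)]
      by_cases h2 : (i : ℕ) < n + 1
      · -- i = n
        have hi : (i : ℕ) = n := by omega
        rw [if_pos h2, hi, if_neg (by omega : ¬ n = (j : ℕ)),
          hDRS j (by omega)]
        ring
      · rw [if_neg h2]
  -- part 1
  have part1 : ∀ x : Fin n → ℤ, (TMat A c n).mulVec x = 0 →
      (TMat A c (n + 1)).mulVec (Fin.snoc x 0) = 0 := by
    intro x hx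
    funext i
    have hxr : ∀ i' : Fin (n + 1), ∑ j, TMat A c n i' j * x j = 0 := by
      intro i'
      have := congrFun hx i'
      simpa [Matrix.mulVec, dotProduct] using this
    simp only [Matrix.mulVec, dotProduct, Pi.zero_apply,
      Fin.sum_univ_castSucc, Fin.snoc_castSucc, Fin.snoc_last, mul_zero,
      add_zero]
    calc ∑ j : Fin n, TMat A c (n + 1) i j.castSucc * x j
        = ∑ j : Fin n, (if h : (i : ℕ) < n then TMat A c n ⟨i, by omega⟩ j
            else TMat A c n (Fin.last n) j) * x j := by
          refine Finset.sum_congr rfl fun j _ => ?_; rw [hrow]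
      _ = 0 := by
          by_cases h : (i : ℕ) < n
          · simp only [dif_pos h]; exact hxr _
          · simp only [dif_neg h]; exact hxr _
  -- row equations for the big matrix
  have part2 : ∀ y : Fin (n + 1) → ℤ, (TMat A c (n + 1)).mulVec y = 0 →
      y (Fin.last n) = 0 ∧ (TMat A c n).mulVec (fun i => y i.castSucc) = 0 := by
    intro y hy
    have hyr : ∀ i : Fin (n + 2), ∑ j, TMat A c (n + 1) i j * y j = 0 := by
      intro i
      have := congrFun hy i
      simpa [Matrix.mulVec, dotProduct] using this
    -- row n:  y_n - ∑ c_j y_j = 0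
    have hn : (n : ℕ) < n + 1 := by omega
    have rown := hyr ⟨n, by omega⟩
    have rowlast := hyr (Fin.last (n + 1))
    have hrn : ∀ j : Fin (n + 1),
        TMat A c (n + 1) ⟨n, by omega⟩ j =
          (if n = (j : ℕ) then 1 else 0) - c j := by
      intro j
      simp only [TMat, Matrix.of_apply, if_pos hn]
      rw [hDRS j j.isLt]
    have hrl : ∀ j : Fin (n + 1),
        TMat A c (n + 1) (Fin.last (n + 1)) j = -c j := by
      intro j
      simp [TMat, Fin.val_last]
    have sum1 : ∑ j : Fin (n + 1), ((if n = (j : ℕ) then 1 else 0) - c j) * y j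
        = 0 := by
      exact (Finset.sum_congr rfl fun j _ => by rw [hrn]).symm.trans rown
    have sum2 : ∑ j : Fin (n + 1), (-c j) * y j = 0 := by
      exact (Finset.sum_congr rfl fun j _ => by rw [hrl]).symm.trans rowlast
    have hylast : y (Fin.last n) = 0 := by
      have key : ∑ j : Fin (n + 1), (if n = (j : ℕ) then 1 else 0) * y j
          = y (Fin.last n) := by
        rw [Fin.sum_univ_castSucc]
        have : ∀ j : Fin n,
            (if n = ((j.castSucc : Fin (n+1)) : ℕ) then (1:ℤ) else 0) * y j.castSucc = 0 := by
          intro j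
          rw [if_neg (by have := j.isLt; simp [Fin.coe_castSucc]; omega)]
          ring
        rw [Finset.sum_congr rfl fun j _ => this j]
        simp [Fin.val_last]
      have expand : ∑ j : Fin (n + 1), ((if n = (j : ℕ) then 1 else 0) - c j) * y j
          = (∑ j : Fin (n + 1), (if n = (j : ℕ) then (1:ℤ) else 0) * y j)
            + ∑ j : Fin (n + 1), (-c j) * y j := by
        rw [← Finset.sum_add_distrib]
        exact Finset.sum_congr rfl fun j _ => by ring
      rw [expand, key, sum2, add_zero] at sum1
      exact sum1
    refine ⟨hylast, ?_⟩
    funext i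
    simp only [Matrix.mulVec, dotProduct, Pi.zero_apply]
    set i' : Fin (n + 2) :=
      if h : (i : ℕ) < n then i.castSucc else Fin.last (n + 1) with hi'
    have hTT : ∀ j : Fin n, TMat A c n i j = TMat A c (n + 1) i' j.castSucc := by
      intro j
      rw [hrow i' j]
      by_cases h : (i : ℕ) < n
      · have : (i' : ℕ) = (i : ℕ) := by simp [hi', h]
        rw [dif_pos (by omega)]
        congr 1
        exact Fin.ext (by simp [this])
      · have hii : (i : ℕ) = n := by have := i.isLt; omega
        have : (i' : ℕ) = n + 1 := by simp [hi', h]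
        rw [dif_neg (by omega)]
        congr 1
        exact Fin.ext (by simp [hii])
    calc ∑ j : Fin n, TMat A c n i j * y j.castSucc
        = ∑ j : Fin n, TMat A c (n + 1) i' j.castSucc * y j.castSucc := by
          exact Finset.sum_congr rfl fun j _ => by rw [hTT]
      _ = ∑ j : Fin (n + 1), TMat A c (n + 1) i' j * y j
            - TMat A c (n + 1) i' (Fin.last n) * y (Fin.last n) := by
          rw [Fin.sum_univ_castSucc]; ring
      _ = 0 := by rw [hyr i', hylast]; ring
  refine ⟨part1, part2, ?_⟩
  -- construct the linear equivalence
  refine ⟨{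
      toFun := fun x => ⟨Fin.snoc (x : Fin n → ℤ) 0, by
        rw [LinearMap.mem_ker, Matrix.mulVecLin_apply]
        exact part1 _ (x.2)⟩
      invFun := fun y => ⟨fun i => (y : Fin (n+1) → ℤ) i.castSucc, by
        rw [LinearMap.mem_ker, Matrix.mulVecLin_apply]
        exact (part2 _ (y.2)).2⟩
      map_add' := by
        intro a b
        apply Subtype.ext
        funext i
        refine Fin.lastCases ?_ (fun j => ?_) i <;> simp
      map_smul' := by
        intro m a
        apply Subtype.ext
        funext i
        refine Fin.lastCases ?_ (fun j => ?_) i <;> simp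
      left_inv := by
        intro a
        apply Subtype.ext
        funext i
        simp
      right_inv := by
        intro b
        apply Subtype.ext
        funext i
        refine Fin.lastCases ?_ (fun j => ?_) i
        · simp only [Fin.snoc_last]
          exact ((part2 _ (b.2)).1).symm
        · simp }, fun x => rfl⟩
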